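/- Let ω be a real number, let C₁, …, C₉ be real parameters, and let q, p, A₊, A₋ : ℝ → ℝ be differentiable functions satisfying at every time: A₊² + A₋² = 2·√(p² + ω²q²), A₊² − A₋² = 2p, A₊·A₋ = ω·q, and p² + ω²q² > 0. Define the anti-commutative structure constants μ^i_{jk} by: μ^i_{jk} = −μ^i_{kj}, μ¹₂₃ = C₂·p − C₃·ω·q − C₄, μ²₁₃ = C₂·p − C₃·ω·q + C₄, μ¹₃₁ = C₂·ω·q + C₃·p − C₁, μ²₂₃ = C₂·ω·q + C₃·p + C₁, μ¹₁₂ = C₅·A₊ + C₆·A₋, μ²₁₂ = C₅·A₋ − C₆·A₊, μ³₁₃ = C₇·A₊ + C₈·A₋, μ³₂₃ = C₇·A₋ − C₈·A₊, μ³₁₂ = C₉, and all remaining components zero. If q′ = p and p′ = −ω²·q hold at every time, then μ satisfies the operadic Lax equation d/dt μ^i_{jk} = Σ_{s=1}^{3} (M^i_s·μ^s_{jk} − M^s_j·μ^i_{sk} − M^s_k·μ^i_{js}) for all i, j, k at every time, where M = (ω/2)·[[0, −1, 0], [1, 0, 0], [0, 0, 0]]. -/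

import Mathlib

/-- The constant matrix `M = (ω/2)·[[0,−1,0],[1,0,0],[0,0,0]]`. -/
noncomputable def M3 (ω : ℝ) : Matrix (Fin 3) (Fin 3) ℝ :=
  (ω / 2) • !![0, -1, 0; 1, 0, 0; 0, 0, 0]

/-- The operadic Lax equation for time-dependent structure constants `μ^i_{jk}`:
`d/dt μ^i_{jk} = Σ_s (M^i_s·μ^s_{jk} − M^s_j·μ^i_{sk} − M^s_k·μ^i_{js})`. -/
def OperadicLax (ω : ℝ) (μ : Fin 3 → Fin 3 → Fin 3 → ℝ → ℝ) : Prop :=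
  ∀ (i j k : Fin 3) (t : ℝ),
    deriv (μ i j k) t =
      ∑ s : Fin 3,
        (M3 ω i s * μ s j k t - M3 ω s j * μ i s k t - M3 ω s k * μ i j s t)

/-- The time-dependent anti-commutative structure constants `μ^i_{jk}`
(indices `1,2,3` correspond to `0,1,2`): `μ¹₂₃ = C₂p − C₃ωq − C₄`,
`μ²₁₃ = C₂p − C₃ωq + C₄`, `μ¹₃₁ = C₂ωq + C₃p − C₁`, `μ²₂₃ = C₂ωq + C₃p + C₁`,
`μ¹₁₂ = C₅A₊ + C₆A₋`, `μ²₁₂ = C₅A₋ − C₆A₊`, `μ³₁₃ = C₇A₊ + C₈A₋`,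
`μ³₂₃ = C₇A₋ − C₈A₊`, `μ³₁₂ = C₉`, with `μ^i_{jk} = −μ^i_{kj}` and all
remaining components zero. -/
noncomputable def μop (ω C₁ C₂ C₃ C₄ C₅ C₆ C₇ C₈ C₉ : ℝ) (q p Ap Am : ℝ → ℝ) :
    Fin 3 → Fin 3 → Fin 3 → ℝ → ℝ :=
  ![![![fun _ => 0,
        fun t => C₅ * Ap t + C₆ * Am t,
        fun t => -(C₂ * ω * q t + C₃ * p t - C₁)],
      ![fun t => -(C₅ * Ap t + C₆ * Am t),
        fun _ => 0,
        fun t => C₂ * p t - C₃ * ω * q t - C₄],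
      ![fun t => C₂ * ω * q t + C₃ * p t - C₁,
        fun t => -(C₂ * p t - C₃ * ω * q t - C₄),
        fun _ => 0]],
    ![![fun _ => 0,
        fun t => C₅ * Am t - C₆ * Ap t,
        fun t => C₂ * p t - C₃ * ω * q t + C₄],
      ![fun t => -(C₅ * Am t - C₆ * Ap t),
        fun _ => 0,
        fun t => C₂ * ω * q t + C₃ * p t + C₁],
      ![fun t => -(C₂ * p t - C₃ * ω * q t + C₄),
        fun t => -(C₂ * ω * q t + C₃ * p t + C₁),
        fun _ => 0]],
    ![![fun _ => 0,
        fun _ => C₉,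
        fun t => C₇ * Ap t + C₈ * Am t],
      ![fun _ => -C₉,
        fun _ => 0,
        fun t => C₇ * Am t - C₈ * Ap t],
      ![fun t => -(C₇ * Ap t + C₈ * Am t),
        fun t => -(C₇ * Am t - C₈ * Ap t),
        fun _ => 0]]]

/-- If `q, p` solve the harmonic-oscillator Hamiltonian equations, then the
structure constants `μ` satisfy the operadic Lax equation. -/
theorem hamilton_implies_operadic_lax (ω C₁ C₂ C₃ C₄ C₅ C₆ C₇ C₈ C₉ : ℝ)
    (q p Ap Am : ℝ → ℝ)
    (hq : Differentiable ℝ q) (hp : Differentiable ℝ p)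
    (hAp : Differentiable ℝ Ap) (hAm : Differentiable ℝ Am)
    (h1 : ∀ t : ℝ, Ap t ^ 2 + Am t ^ 2 = 2 * Real.sqrt (p t ^ 2 + ω ^ 2 * q t ^ 2))
    (h2 : ∀ t : ℝ, Ap t ^ 2 - Am t ^ 2 = 2 * p t)
    (h3 : ∀ t : ℝ, Ap t * Am t = ω * q t)
    (hpos : ∀ t : ℝ, 0 < p t ^ 2 + ω ^ 2 * q t ^ 2)
    (hHam : ∀ t : ℝ, deriv q t = p t ∧ deriv p t = -(ω ^ 2) * q t) :
    OperadicLax ω (μop ω C₁ C₂ C₃ C₄ C₅ C₆ C₇ C₈ C₉ q p Ap Am) := by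
  
  have Hq : ∀ t, HasDerivAt q (p t) t := fun t => (hHam t).1 ▸ (hq t).hasDerivAt
  have Hp : ∀ t, HasDerivAt p (-(ω^2) * q t) t := fun t => (hHam t).2 ▸ (hp t).hasDerivAt
  have HE : ∀ t, HasDerivAt (fun s => p s ^ 2 + ω^2 * q s ^ 2) 0 t := by
    intro t
    have h : HasDerivAt (fun s => p s ^ 2 + ω^2 * q s ^ 2) _ t := ((Hp t).pow 2).add (((Hq t).pow 2).const_mul (ω^2))
    convert h using 1
    ring
  have Hsq : ∀ t, HasDerivAt (fun s => Ap s ^ 2 + Am s ^ 2) 0 t := by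
    intro t
    have h1f : (fun s => Ap s ^ 2 + Am s ^ 2)
        = fun s => 2 * Real.sqrt (p s ^ 2 + ω^2 * q s ^ 2) := funext h1
    rw [h1f]
    have hs : HasDerivAt (fun s => 2 * Real.sqrt (p s ^ 2 + ω^2 * q s ^ 2)) _ t := ((Real.hasDerivAt_sqrt (ne_of_gt (hpos t))).comp t (HE t)).const_mul 2
    convert hs using 1
    ring
  have key : ∀ t, deriv Ap t = -(ω/2) * Am t ∧ deriv Am t = ω/2 * Ap t := by
    intro t
    have HAp := (hAp t).hasDerivAt
    have HAm := (hAm t).hasDerivAt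
    set x := deriv Ap t
    set y := deriv Am t
    have e1 : Ap t * x + Am t * y = 0 := by
      have h := ((HAp.pow 2).add (HAm.pow 2)).unique (Hsq t)
      linear_combination h / 2
    have e2 : Ap t * x - Am t * y = -(ω * (Ap t * Am t)) := by
      have hfun : (fun s => Ap s ^ 2 - Am s ^ 2) = fun s => 2 * p s := funext h2
      have hd : HasDerivAt (fun s => Ap s ^ 2 - Am s ^ 2) (2 * (-(ω^2) * q t)) t := by
        rw [hfun]; exact (Hp t).const_mul 2
      have h := ((HAp.pow 2).sub (HAm.pow 2)).unique hd
      linear_combination h / 2 + ω * h3 t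
    have e3 : Am t * x + Ap t * y = ω/2 * (Ap t^2 - Am t^2) := by
      have hfun : (fun s => Ap s * Am s) = fun s => ω * q s := funext h3
      have hd : HasDerivAt (fun s => Ap s * Am s) (ω * p t) t := by
        rw [hfun]; exact (Hq t).const_mul ω
      have h := (HAp.mul HAm).unique hd
      linear_combination h - ω/2 * h2 t
    have hsum : 0 < Ap t ^2 + Am t ^2 := by
      rw [h1 t]
      have := Real.sqrt_pos.mpr (hpos t)
      linarith
    have hu : Ap t * (x + ω/2 * Am t) = 0 := by linear_combination (e1 + e2) / 2
    have hv : Am t * (y - ω/2 * Ap t) = 0 := by linear_combination (e1 - e2) / 2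
    have hw : Am t * (x + ω/2 * Am t) + Ap t * (y - ω/2 * Ap t) = 0 := by
      linear_combination e3
    have hu0 : (Ap t^2 + Am t^2) * (x + ω/2*Am t) = 0 := by
      linear_combination Ap t * hu + Am t * hw - Ap t * hv
    have hv0 : (Ap t^2 + Am t^2) * (y - ω/2*Ap t) = 0 := by
      linear_combination Ap t * hw - Am t * hu + Am t * hv
    constructor
    · have := (mul_eq_zero.mp hu0).resolve_left (ne_of_gt hsum)
      linarith
    · have := (mul_eq_zero.mp hv0).resolve_left (ne_of_gt hsum)
      linarith
  have HAp : ∀ t, HasDerivAt Ap (-(ω/2) * Am t) t := fun t => (key t).1 ▸ (hAp t).hasDerivAt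
  have HAm : ∀ t, HasDerivAt Am (ω/2 * Ap t) t := fun t => (key t).2 ▸ (hAm t).hasDerivAt
  intro i j k t
  have d1a : HasDerivAt (fun s => C₅ * Ap s + C₆ * Am s)
      (C₅ * (-(ω/2) * Am t) + C₆ * (ω/2 * Ap t)) t :=
    ((HAp t).const_mul C₅).add ((HAm t).const_mul C₆)
  have d1b : HasDerivAt (fun s => C₅ * Am s - C₆ * Ap s)
      (C₅ * (ω/2 * Ap t) - C₆ * (-(ω/2) * Am t)) t :=
    ((HAm t).const_mul C₅).sub ((HAp t).const_mul C₆)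
  have d3a : HasDerivAt (fun s => C₇ * Ap s + C₈ * Am s)
      (C₇ * (-(ω/2) * Am t) + C₈ * (ω/2 * Ap t)) t :=
    ((HAp t).const_mul C₇).add ((HAm t).const_mul C₈)
  have d3b : HasDerivAt (fun s => C₇ * Am s - C₈ * Ap s)
      (C₇ * (ω/2 * Ap t) - C₈ * (-(ω/2) * Am t)) t :=
    ((HAm t).const_mul C₇).sub ((HAp t).const_mul C₈)
  have dP : HasDerivAt (fun s => C₂ * p s - C₃ * ω * q s - C₄)
      (C₂ * (-(ω^2) * q t) - C₃ * ω * p t) t :=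
    (((Hp t).const_mul C₂).sub ((Hq t).const_mul (C₃ * ω))).sub_const C₄
  have dPp : HasDerivAt (fun s => C₂ * p s - C₃ * ω * q s + C₄)
      (C₂ * (-(ω^2) * q t) - C₃ * ω * p t) t :=
    (((Hp t).const_mul C₂).sub ((Hq t).const_mul (C₃ * ω))).add_const C₄
  have dQ : HasDerivAt (fun s => C₂ * ω * q s + C₃ * p s - C₁)
      (C₂ * ω * p t + C₃ * (-(ω^2) * q t)) t :=
    (((Hq t).const_mul (C₂ * ω)).add ((Hp t).const_mul C₃)).sub_const C₁
  have dQp : HasDerivAt (fun s => C₂ * ω * q s + C₃ * p s + C₁)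
      (C₂ * ω * p t + C₃ * (-(ω^2) * q t)) t :=
    (((Hq t).const_mul (C₂ * ω)).add ((Hp t).const_mul C₃)).add_const C₁
  fin_cases i <;> fin_cases j <;> fin_cases k <;>
    simp only [Fin.zero_eta, Fin.mk_one, Fin.reduceFinMk, μop, M3, Fin.sum_univ_three,
      Fin.isValue, Matrix.cons_val_zero, Matrix.cons_val_one, Matrix.head_cons,
      Matrix.cons_val_two, Matrix.tail_cons, Matrix.head_fin_const, Matrix.smul_apply,
      Matrix.of_apply, Matrix.cons_val', Matrix.empty_val', Matrix.cons_val_fin_one,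
      smul_eq_mul] <;>
    first
      | (rw [deriv_const']; ring)
      | (rw [d1a.deriv]; ring)
      | (erw [d1a.neg.deriv]; ring)
      | (rw [d1b.deriv]; ring)
      | (erw [d1b.neg.deriv]; ring)
      | (rw [d3a.deriv]; ring)
      | (erw [d3a.neg.deriv]; ring)
      | (rw [d3b.deriv]; ring)
      | (erw [d3b.neg.deriv]; ring)
      | (rw [dP.deriv]; ring)
      | (erw [dP.neg.deriv]; ring)
      | (rw [dPp.deriv]; ring)
      | (erw [dPp.neg.deriv]; ring)
      | (rw [dQ.deriv]; ring)
      | (erw [dQ.neg.deriv]; ring)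
      | (rw [dQp.deriv]; ring)
      | (erw [dQp.neg.deriv]; ring)
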